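/- Let 1 < p < ∞. If (x_n) is a weakly p-summable sequence in a Banach space X and (φ_n) is a bounded sequence in C(K) for a compact Hausdorff space K, then the sequence (φ_n x_n) is weakly p-summable in C(K, X). -/

import Mathlib

open Filter Topology

section Defs

variable {Z : Type*} [NormedAddCommGroup Z] [NormedSpace ℝ Z]

/-- A sequence is weakly null: every continuous linear functional sends it to a null sequence. -/
def WeaklyNull (x : ℕ → Z) : Prop :=
  ∀ f : Z →L[ℝ] ℝ, Tendsto (fun n => f (x n)) atTop (𝓝 (0 : ℝ))

/-- A sequence is weakly `p`-summable: every functional sends it into `ℓ_p`. -/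
def WeaklyPSummable (p : ENNReal) (x : ℕ → Z) : Prop :=
  ∀ f : Z →L[ℝ] ℝ, Memℓp (fun n => f (x n)) p

/-- A set is limited: every weak*-null sequence of functionals tends to `0` uniformly on it. -/
def IsLimitedSet (A : Set Z) : Prop :=
  ∀ g : ℕ → Z →L[ℝ] ℝ, (∀ z : Z, Tendsto (fun k => g k z) atTop (𝓝 (0 : ℝ))) →
    ∀ ε > 0, ∃ N, ∀ k ≥ N, ∀ a ∈ A, |g k a| < ε

/-- A set is a Dunford–Pettis set: every weakly null sequence of functionals tends to `0`
uniformly on it. -/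
def IsDPSet (A : Set Z) : Prop :=
  ∀ g : ℕ → Z →L[ℝ] ℝ, WeaklyNull g →
    ∀ ε > 0, ∃ N, ∀ k ≥ N, ∀ a ∈ A, |g k a| < ε

end Defs

section Aux

/-- Hölder inequality for finite sums, with absolute value on the left. -/
lemma abs_sum_mul_le {p q : ℝ} (hpq : Real.HolderConjugate p q) (s : Finset ℕ) (c d : ℕ → ℝ) :
    |∑ n ∈ s, c n * d n| ≤
      (∑ n ∈ s, |c n| ^ q) ^ (1 / q) * (∑ n ∈ s, |d n| ^ p) ^ (1 / p) := by
  calc |∑ n ∈ s, c n * d n| ≤ ∑ n ∈ s, |c n * d n| := Finset.abs_sum_le_sum_abs _ _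
    _ = ∑ n ∈ s, |c n| * |d n| := by simp [abs_mul]
    _ ≤ _ := by
        simpa [abs_abs] using
          Real.inner_le_Lp_mul_Lq s (fun n => |c n|) (fun n => |d n|) hpq.symm

/-- Duality: if all `q`-normalized pairings with `b` on `s` are bounded by `D`, then the
`p`-sum of `b` on `s` is bounded by `D ^ p`. -/
lemma sum_abs_rpow_le_of_pairing {p q : ℝ} (hpq : Real.HolderConjugate p q) (s : Finset ℕ)
    (b : ℕ → ℝ) {D : ℝ} (hD : 0 ≤ D)
    (h : ∀ a : ℕ → ℝ, (∑ n ∈ s, |a n| ^ q) ≤ 1 → (∑ n ∈ s, a n * b n) ≤ D) :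
    (∑ n ∈ s, |b n| ^ p) ≤ D ^ p := by
  set A := ∑ n ∈ s, |b n| ^ p with hA
  have hA0 : 0 ≤ A := Finset.sum_nonneg fun n _ => Real.rpow_nonneg (abs_nonneg _) _
  rcases eq_or_lt_of_le hA0 with h0 | hApos
  · rw [← h0]; exact Real.rpow_nonneg hD p
  have hp0 : 0 < p := hpq.pos
  have hq0 : 0 < q := hpq.symm.pos
  have hp1 : p - 1 ≠ 0 := by have := hpq.lt; intro h'; rw [sub_eq_zero] at h'; linarith
  have hAq : (0:ℝ) < A ^ (1 / q) := Real.rpow_pos_of_pos hApos _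
  set a : ℕ → ℝ := fun n => (if b n = 0 then 0 else |b n| ^ p / b n) / A ^ (1 / q) with ha
  have habs : ∀ n, |a n| = |b n| ^ (p - 1) / A ^ (1 / q) := by
    intro n
    by_cases hb : b n = 0
    · simp [ha, hb, Real.zero_rpow hp1]
    · rw [ha]
      simp only [if_neg hb]
      rw [abs_div, abs_div, abs_of_pos hAq,
        abs_of_nonneg (Real.rpow_nonneg (abs_nonneg _) p),
        Real.rpow_sub_one (abs_ne_zero.mpr hb)]
  have habsq : ∀ n, |a n| ^ q = |b n| ^ p / A := by
    intro n
    rw [habs n, Real.div_rpow (Real.rpow_nonneg (abs_nonneg _) _) hAq.le,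
      ← Real.rpow_mul (abs_nonneg _), hpq.sub_one_mul_conj,
      ← Real.rpow_mul hA0, one_div_mul_cancel hq0.ne', Real.rpow_one]
  have hcond : (∑ n ∈ s, |a n| ^ q) ≤ 1 := by
    have : (∑ n ∈ s, |a n| ^ q) = A / A := by
      rw [Finset.sum_congr rfl fun n _ => habsq n, ← Finset.sum_div]
    rw [this, div_self hApos.ne']
  have hsum : (∑ n ∈ s, a n * b n) = A ^ (1 / p) := by
    have he : ∀ n ∈ s, a n * b n = |b n| ^ p / A ^ (1 / q) := by
      intro n _
      by_cases hb : b n = 0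
      · simp [ha, hb, Real.zero_rpow hp0.ne']
      · rw [ha]
        simp only [if_neg hb]
        field_simp
    rw [Finset.sum_congr rfl he, ← Finset.sum_div]
    rw [eq_comm, eq_div_iff hAq.ne', ← Real.rpow_add hApos,
      show 1 / p + 1 / q = 1 by rw [one_div, one_div, hpq.inv_add_inv_eq_one], Real.rpow_one]
  have hle : A ^ (1 / p) ≤ D := by rw [← hsum]; exact h a hcond
  calc A = (A ^ (1 / p)) ^ p := by
        rw [← Real.rpow_mul hA0, one_div_mul_cancel hp0.ne', Real.rpow_one]
    _ ≤ D ^ p := Real.rpow_le_rpow (Real.rpow_nonneg hA0 _) hle hp0.le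

end Aux

theorem stmt3 {K X : Type*} [TopologicalSpace K] [CompactSpace K] [T2Space K]
    [NormedAddCommGroup X] [NormedSpace ℝ X] [CompleteSpace X]
    (p : ℝ) (hp : 1 < p)
    (x : ℕ → X) (hx : WeaklyPSummable (ENNReal.ofReal p) x)
    (φ : ℕ → C(K, ℝ)) (M : ℝ) (hφ : ∀ n, ‖φ n‖ ≤ M) :
    WeaklyPSummable (ENNReal.ofReal p)
      (fun n => ContinuousMap.mk (fun t => φ n t • x n)
        ((map_continuous (φ n)).smul continuous_const)) := by
  intro f
  have hp0 : (0:ℝ) < p := lt_trans one_pos hp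
  set q := Real.conjExponent p with hq
  have hpq : Real.HolderConjugate p q := Real.HolderConjugate.conjExponent hp
  have hq0 : 0 < q := hpq.symm.pos
  have hPr : (ENNReal.ofReal p).toReal = p := ENNReal.toReal_ofReal hp0.le
  -- Banach–Steinhaus: uniform bound on pairings of (x n) against q-normalized coefficients
  set ι := {sa : Finset ℕ × (ℕ → ℝ) // ∑ n ∈ sa.1, |sa.2 n| ^ q ≤ 1} with hι
  set g : ι → (X →L[ℝ] ℝ) →L[ℝ] ℝ :=
    fun i => ∑ n ∈ i.1.1, i.1.2 n • ContinuousLinearMap.apply ℝ ℝ (x n) with hg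
  have hgapp : ∀ (i : ι) (x' : X →L[ℝ] ℝ), g i x' = ∑ n ∈ i.1.1, i.1.2 n * x' (x n) := by
    intro i x'
    simp [hg]
  have hbs : ∀ x' : X →L[ℝ] ℝ, ∃ C, ∀ i : ι, ‖g i x'‖ ≤ C := by
    intro x'
    have hsummable : Summable fun n => |x' (x n)| ^ p := by
      have := (memℓp_gen_iff (by rw [hPr]; exact hp0)).mp (hx x')
      simpa [hPr, Real.norm_eq_abs] using this
    refine ⟨(∑' n, |x' (x n)| ^ p) ^ (1 / p), fun i => ?_⟩
    rw [hgapp, Real.norm_eq_abs]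
    calc |∑ n ∈ i.1.1, i.1.2 n * x' (x n)|
        ≤ (∑ n ∈ i.1.1, |i.1.2 n| ^ q) ^ (1 / q) *
            (∑ n ∈ i.1.1, |x' (x n)| ^ p) ^ (1 / p) := abs_sum_mul_le hpq _ _ _
      _ ≤ 1 * (∑' n, |x' (x n)| ^ p) ^ (1 / p) := by
          apply mul_le_mul
          · exact Real.rpow_le_one
              (Finset.sum_nonneg fun n _ => Real.rpow_nonneg (abs_nonneg _) _) i.2
              (le_of_lt (one_div_pos.mpr hq0))
          · exact Real.rpow_le_rpow
              (Finset.sum_nonneg fun n _ => Real.rpow_nonneg (abs_nonneg _) _)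
              (Summable.sum_le_tsum _ (fun n _ => Real.rpow_nonneg (abs_nonneg _) _) hsummable)
              (le_of_lt (one_div_pos.mpr hp0))
          · exact Real.rpow_nonneg
              (Finset.sum_nonneg fun n _ => Real.rpow_nonneg (abs_nonneg _) _) _
          · norm_num
      _ = (∑' n, |x' (x n)| ^ p) ^ (1 / p) := one_mul _
  obtain ⟨C₀, hC₀⟩ := banach_steinhaus hbs
  set C₁ := max C₀ 0 with hC₁
  have hC₁0 : (0:ℝ) ≤ C₁ := le_max_right _ _
  have hkey : ∀ (x' : X →L[ℝ] ℝ) (s : Finset ℕ),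
      (∑ n ∈ s, |x' (x n)| ^ p) ^ (1 / p) ≤ C₁ * ‖x'‖ := by
    intro x' s
    have h1 : ∑ n ∈ s, |x' (x n)| ^ p ≤ (C₁ * ‖x'‖) ^ p := by
      apply sum_abs_rpow_le_of_pairing hpq s _ (by positivity)
      intro a ha2
      calc ∑ n ∈ s, a n * x' (x n) = g ⟨(s, a), ha2⟩ x' := (hgapp ⟨(s, a), ha2⟩ x').symm
        _ ≤ |g ⟨(s, a), ha2⟩ x'| := le_abs_self _
        _ = ‖g ⟨(s, a), ha2⟩ x'‖ := (Real.norm_eq_abs _).symm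
        _ ≤ ‖g ⟨(s, a), ha2⟩‖ * ‖x'‖ := ContinuousLinearMap.le_opNorm _ _
        _ ≤ C₁ * ‖x'‖ :=
            mul_le_mul_of_nonneg_right (le_trans (hC₀ _) (le_max_left _ _)) (norm_nonneg _)
    calc (∑ n ∈ s, |x' (x n)| ^ p) ^ (1 / p) ≤ ((C₁ * ‖x'‖) ^ p) ^ (1 / p) :=
        Real.rpow_le_rpow
          (Finset.sum_nonneg fun n _ => Real.rpow_nonneg (abs_nonneg _) _) h1
          (le_of_lt (one_div_pos.mpr hp0))
      _ = C₁ * ‖x'‖ := by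
          rw [← Real.rpow_mul (by positivity), mul_one_div_cancel hp0.ne', Real.rpow_one]
  -- Final estimate
  set M' := max M 0 with hM'
  have hM'0 : (0:ℝ) ≤ M' := le_max_right _ _
  set ψ : ℕ → C(K, X) := fun n => ContinuousMap.mk (fun t => φ n t • x n)
    ((map_continuous (φ n)).smul continuous_const) with hψ
  apply memℓp_gen' (C := (‖f‖ * (M' * C₁)) ^ p)
  intro s
  simp only [hPr, Real.norm_eq_abs]
  apply sum_abs_rpow_le_of_pairing hpq s _ (by positivity)
  intro a ha
  set G : C(K, X) := ∑ n ∈ s, a n • ψ n with hG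
  have hGnorm : ‖G‖ ≤ M' * C₁ := by
    rw [ContinuousMap.norm_le _ (by positivity)]
    intro t
    have hGt : G t = ∑ n ∈ s, (a n * φ n t) • x n := by
      simp [hG, hψ, smul_smul]
    rw [hGt]
    apply NormedSpace.norm_le_dual_bound ℝ _ (by positivity)
    intro x'
    rw [map_sum]
    simp only [map_smul, smul_eq_mul, Real.norm_eq_abs]
    have hfirst : (∑ n ∈ s, |a n * φ n t| ^ q) ^ (1 / q) ≤ M' := by
      have hptw : ∀ n ∈ s, |a n * φ n t| ^ q ≤ M' ^ q * |a n| ^ q := by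
        intro n _
        have h1 : |a n| * |φ n t| ≤ M' * |a n| := by
          rw [mul_comm]
          refine mul_le_mul_of_nonneg_right ?_ (abs_nonneg _)
          calc |φ n t| = ‖φ n t‖ := (Real.norm_eq_abs _).symm
            _ ≤ ‖φ n‖ := (φ n).norm_coe_le_norm t
            _ ≤ M := hφ n
            _ ≤ M' := le_max_left _ _
        calc |a n * φ n t| ^ q = (|a n| * |φ n t|) ^ q := by rw [abs_mul]
          _ ≤ (M' * |a n|) ^ q := Real.rpow_le_rpow (by positivity) h1 hq0.le
          _ = M' ^ q * |a n| ^ q := Real.mul_rpow hM'0 (abs_nonneg _)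
      calc (∑ n ∈ s, |a n * φ n t| ^ q) ^ (1 / q)
          ≤ (M' ^ q * ∑ n ∈ s, |a n| ^ q) ^ (1 / q) := by
            apply Real.rpow_le_rpow
              (Finset.sum_nonneg fun n _ => Real.rpow_nonneg (abs_nonneg _) _)
              ?_ (le_of_lt (one_div_pos.mpr hq0))
            rw [Finset.mul_sum]
            exact Finset.sum_le_sum hptw
        _ ≤ (M' ^ q * 1) ^ (1 / q) := by
            apply Real.rpow_le_rpow (by positivity)
              (mul_le_mul_of_nonneg_left ha (Real.rpow_nonneg hM'0 _))
              (le_of_lt (one_div_pos.mpr hq0))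
        _ = M' := by
            rw [mul_one, ← Real.rpow_mul hM'0, mul_one_div_cancel hq0.ne', Real.rpow_one]
    calc |∑ n ∈ s, a n * φ n t * x' (x n)|
        ≤ (∑ n ∈ s, |a n * φ n t| ^ q) ^ (1 / q) *
            (∑ n ∈ s, |x' (x n)| ^ p) ^ (1 / p) := abs_sum_mul_le hpq _ _ _
      _ ≤ M' * (C₁ * ‖x'‖) := by
          apply mul_le_mul hfirst (hkey x' s) ?_ hM'0
          exact Real.rpow_nonneg
            (Finset.sum_nonneg fun n _ => Real.rpow_nonneg (abs_nonneg _) _) _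
      _ = M' * C₁ * ‖x'‖ := by ring
  calc ∑ n ∈ s, a n * f (ψ n) = f G := by
        rw [hG, map_sum]
        exact Finset.sum_congr rfl fun n _ => by rw [map_smul, smul_eq_mul]
    _ ≤ |f G| := le_abs_self _
    _ = ‖f G‖ := (Real.norm_eq_abs _).symm
    _ ≤ ‖f‖ * ‖G‖ := f.le_opNorm G
    _ ≤ ‖f‖ * (M' * C₁) := mul_le_mul_of_nonneg_left hGnorm (norm_nonneg f)
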